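/- Let φ be an N-function satisfying Assumption (φ C¹ on [0,∞), C² on (0,∞), φ'(t) ∼ tφ''(t)) and let B ⊂ ℝⁿ be a ball. There exists δ > 0, depending only on the characteristics of φ, such that for every u ∈ W^{1,φ}(B; ℝ^N): if ⨍_B |V(∇u) − ⟨V(∇u)⟩_B|² dx ≤ δ ⨍_B |V(∇u)|² dx, then ⨍_B |V(∇u)|² dx ≤ 4 |V(⟨∇u⟩_B)|² and ⨍_B |V(∇u) − ⟨V(∇u)⟩_B|² dx ≤ 4δ |V(⟨∇u⟩_B)|². -/

import Mathlib

open Set Filter MeasureTheory Metric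

def IsNFunction (ψ ψ' : ℝ → ℝ) : Prop :=
  ψ 0 = 0 ∧
  (∀ t ∈ Set.Ici (0:ℝ), HasDerivWithinAt ψ (ψ' t) (Set.Ici 0) t) ∧
  MonotoneOn ψ' (Set.Ici 0) ∧
  (∀ t ∈ Set.Ici (0:ℝ), ContinuousWithinAt ψ' (Set.Ici t) t) ∧
  ψ' 0 = 0 ∧
  (∀ t > (0:ℝ), 0 < ψ' t) ∧
  Filter.Tendsto ψ' Filter.atTop Filter.atTop

noncomputable def Vfn {E : Type*} [NormedAddCommGroup E] [NormedSpace ℝ E]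
    (φ' : ℝ → ℝ) (Q : E) : E :=
  Real.sqrt (φ' ‖Q‖ / ‖Q‖) • Q

section helpers
variable {F : Type*} [NormedAddCommGroup F] [NormedSpace ℝ F]

variable {F : Type*} [NormedAddCommGroup F] [NormedSpace ℝ F]

lemma normVfn_sq (φ' : ℝ → ℝ) (hnn : ∀ t, 0 ≤ t → 0 ≤ φ' t) (Q : F) :
    ‖Vfn φ' Q‖ ^ 2 = ‖Q‖ * φ' ‖Q‖ := by
  rcases eq_or_ne Q 0 with rfl | hQ
  · simp [Vfn]
  · have hQ0 : 0 < ‖Q‖ := norm_pos_iff.2 hQ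
    have hx : 0 ≤ φ' ‖Q‖ / ‖Q‖ := div_nonneg (hnn _ (norm_nonneg _)) hQ0.le
    rw [Vfn, norm_smul, Real.norm_eq_abs, abs_of_nonneg (Real.sqrt_nonneg _), mul_pow,
      Real.sq_sqrt hx]
    field_simp

lemma smul_unit (c : ℝ) (hc : 0 ≤ c) (Q : F) (h : c • Q ≠ 0) :
    ‖c • Q‖⁻¹ • (c • Q) = ‖Q‖⁻¹ • Q := by
  have hcne : c ≠ 0 := fun h0 => h (by rw [h0, zero_smul])
  have hQ : Q ≠ 0 := fun h0 => h (by rw [h0, smul_zero])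
  have hQn : ‖Q‖ ≠ 0 := norm_ne_zero_iff.2 hQ
  rw [norm_smul, Real.norm_eq_abs, abs_of_nonneg hc, smul_smul]
  congr 1
  field_simp

lemma Vfn_unit (φ' : ℝ → ℝ) (Q : F) (h : Vfn φ' Q ≠ 0) :
    ‖Vfn φ' Q‖⁻¹ • Vfn φ' Q = ‖Q‖⁻¹ • Q :=
  smul_unit _ (Real.sqrt_nonneg _) Q h

lemma unit_sub (a b : F) (s : ℝ) (hs : 0 < s) (ha : s ≤ ‖a‖) (hb : s ≤ ‖b‖) :
    ‖‖a‖⁻¹ • a - ‖b‖⁻¹ • b‖ ≤ 2 * ‖a - b‖ / s := by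
  have ha0 : 0 < ‖a‖ := lt_of_lt_of_le hs ha
  have hb0 : 0 < ‖b‖ := lt_of_lt_of_le hs hb
  have key : ‖a‖⁻¹ • a - ‖b‖⁻¹ • b = ‖a‖⁻¹ • (a - b) + (‖a‖⁻¹ - ‖b‖⁻¹) • b := by
    rw [smul_sub, sub_smul]; abel
  rw [key]
  have h1 : ‖‖a‖⁻¹ • (a - b)‖ = ‖a‖⁻¹ * ‖a - b‖ := by
    rw [norm_smul, Real.norm_eq_abs, abs_of_nonneg (by positivity)]
  have h2 : ‖(‖a‖⁻¹ - ‖b‖⁻¹) • b‖ ≤ ‖a‖⁻¹ * ‖a - b‖ := by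
    rw [norm_smul, Real.norm_eq_abs]
    have : |‖a‖⁻¹ - ‖b‖⁻¹| = |‖b‖ - ‖a‖| / (‖a‖ * ‖b‖) := by
      rw [show ‖a‖⁻¹ - ‖b‖⁻¹ = (‖b‖ - ‖a‖) / (‖a‖ * ‖b‖) by field_simp, abs_div,
        abs_of_pos (by positivity : (0:ℝ) < ‖a‖ * ‖b‖)]
    rw [this]
    have h3 : |‖b‖ - ‖a‖| ≤ ‖a - b‖ := by
      rw [abs_sub_comm]
      exact (abs_norm_sub_norm_le a b)
    calc |‖b‖ - ‖a‖| / (‖a‖ * ‖b‖) * ‖b‖ = |‖b‖ - ‖a‖| / ‖a‖ := by field_simp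
    _ ≤ ‖a - b‖ / ‖a‖ := by gcongr
    _ = ‖a‖⁻¹ * ‖a - b‖ := by ring
  calc ‖‖a‖⁻¹ • (a - b) + (‖a‖⁻¹ - ‖b‖⁻¹) • b‖ ≤ ‖‖a‖⁻¹ • (a - b)‖ + ‖(‖a‖⁻¹ - ‖b‖⁻¹) • b‖ :=
        norm_add_le _ _
  _ ≤ ‖a‖⁻¹ * ‖a - b‖ + ‖a‖⁻¹ * ‖a - b‖ := by rw [h1]; gcongr
  _ = 2 * ‖a - b‖ / ‖a‖ := by ring
  _ ≤ 2 * ‖a - b‖ / s := by gcongr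

lemma theta_ratio (φ' : ℝ → ℝ) (hmono : MonotoneOn φ' (Set.Ici 0))
    (hnn : ∀ t, 0 ≤ t → 0 ≤ φ' t) {a w : ℝ} (ha : 0 < a) (hw : 0 ≤ w) :
    w * (a * φ' a) ≤ a * (a * φ' a) + a * (w * φ' w) := by
  rcases le_or_gt w a with h | h
  · have h1 : 0 ≤ w * φ' w := mul_nonneg hw (hnn _ hw)
    have h2 : 0 ≤ a * φ' a := mul_nonneg ha.le (hnn _ ha.le)
    nlinarith
  · have h1 : φ' a ≤ φ' w := hmono (le_of_lt ha) (le_of_lt (ha.trans h)) h.le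
    have h2 : 0 ≤ a * φ' a := mul_nonneg ha.le (hnn _ ha.le)
    have h3 : (w * a) * φ' a ≤ (w * a) * φ' w :=
      mul_le_mul_of_nonneg_left h1 (mul_nonneg hw ha.le)
    nlinarith [h3, h2]

lemma gronwall (φ' φ'' : ℝ → ℝ) (c₂ : ℝ)
    (hd : ∀ t > (0:ℝ), HasDerivAt φ' (φ'' t) t)
    (hpos : ∀ t > (0:ℝ), 0 < φ' t)
    (hub : ∀ t > (0:ℝ), t * φ'' t ≤ c₂ * φ' t)
    {s t : ℝ} (hs : 0 < s) (hst : s ≤ t) :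
    (s / t) ^ c₂ * φ' t ≤ φ' s := by
  have ht : 0 < t := hs.trans_le hst
  set h : ℝ → ℝ := fun u => Real.log (φ' u) - c₂ * Real.log u with hh
  have hder : ∀ u ∈ Set.Icc s t, HasDerivAt h (φ'' u / φ' u - c₂ * u⁻¹) u := by
    intro u hu
    have hu0 : 0 < u := lt_of_lt_of_le hs hu.1
    exact ((hd u hu0).log (ne_of_gt (hpos u hu0))).sub
      ((Real.hasDerivAt_log (ne_of_gt hu0)).const_mul c₂)
  have hanti : AntitoneOn h (Set.Icc s t) := by
    apply antitoneOn_of_deriv_nonpos (convex_Icc s t)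
    · intro u hu
      exact (hder u hu).continuousAt.continuousWithinAt
    · intro u hu
      rw [interior_Icc] at hu
      exact (hder u (Set.mem_Icc_of_Ioo hu)).differentiableAt.differentiableWithinAt
    · intro u hu
      rw [interior_Icc] at hu
      have hu0 : 0 < u := lt_of_lt_of_le hs hu.1.le
      rw [(hder u (Set.mem_Icc_of_Ioo hu)).deriv]
      have := hub u hu0
      have hφ : 0 < φ' u := hpos u hu0
      rw [sub_nonpos, div_le_iff₀ hφ]
      calc φ'' u = (u * φ'' u) / u := by field_simp
      _ ≤ (c₂ * φ' u) / u := by gcongr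
      _ = c₂ * u⁻¹ * φ' u := by ring
  have hle : h t ≤ h s := hanti (Set.left_mem_Icc.2 hst) (Set.right_mem_Icc.2 hst) hst
  have hφs : 0 < φ' s := hpos s hs
  have hφt : 0 < φ' t := hpos t ht
  rw [hh] at hle
  simp only at hle
  have hst' : 0 < s / t := by positivity
  rw [Real.rpow_def_of_pos hst', Real.log_div (ne_of_gt hs) (ne_of_gt ht)]
  calc Real.exp ((Real.log s - Real.log t) * c₂) * φ' t
      = Real.exp ((Real.log s - Real.log t) * c₂ + Real.log (φ' t)) := by
        rw [Real.exp_add, Real.exp_log hφt]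
  _ ≤ Real.exp (Real.log (φ' s)) := by
        apply Real.exp_le_exp.2
        nlinarith [hle]
  _ = φ' s := Real.exp_log hφs

end helpers

lemma arith_sqrt_ub {x s : ℝ} (hs : 0 < s) (h : x^2 ≤ s^2) (hx : 0 ≤ x) : x ≤ s := by
  nlinarith

lemma arith_sqrt_lb {x s : ℝ} (hs : 0 ≤ s) (h : s^2 ≤ x^2) (hx : 0 ≤ x) : s ≤ x := by
  nlinarith

lemma calc_good_w {E s₀ η a w A v : ℝ} (hE : 0 < E) (hs : s₀^2 = E)
    (ha : 0 < a) (hw : 0 ≤ w) (hvnn : 0 ≤ v)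
    (hA1 : 0.36*E ≤ A) (hA2 : A ≤ 1.21*E) (hvub : v ≤ 1.1*s₀)
    (hrat : w * A ≤ a*A + a*v^2) : w ≤ 7*a := by
  have hs0 : 0 ≤ s₀ := by nlinarith
  have hv2 : v^2 ≤ 1.21*E := by nlinarith
  have hstep : w * (0.36*E) ≤ a * (1.21*E) + a * (1.21*E) := by
    nlinarith [mul_nonneg hw (sub_nonneg.2 hA1),
      mul_le_mul_of_nonneg_left hA2 ha.le,
      mul_le_mul_of_nonneg_left hv2 ha.le]
  nlinarith

lemma calc_good_mag1 {E s₀ η a w A v vq : ℝ} (hE : 0 < E) (hs : s₀^2 = E)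
    (hη : 0 < η) (ha : 0 < a) (haw : a ≤ w)
    (hA1 : 0.36*E ≤ A) (hvq : vq^2 = A)
    (hvqub : vq ≤ 1.1*s₀) (hvub : v ≤ 1.1*s₀) (hvnn : 0 ≤ v) (hvqnn : 0 ≤ vq)
    (h2 : w * A ≤ a * v^2) (hvv1 : v - vq ≤ 2*η*s₀) : w - a ≤ 13*η*a := by
  have hs0 : 0 ≤ s₀ := by nlinarith
  have hdiff : v^2 - vq^2 ≤ 4.4*η*E := by
    nlinarith [mul_le_mul_of_nonneg_left hvv1 (show (0:ℝ) ≤ v + vq by positivity),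
      mul_le_mul_of_nonneg_right (show v + vq ≤ 2.2*s₀ by linarith)
        (show (0:ℝ) ≤ 2*η*s₀ by positivity)]
  have hstep : (w - a) * (0.36*E) ≤ 4.4*η*E*a := by
    nlinarith [mul_nonneg (sub_nonneg.2 haw) (sub_nonneg.2 hA1),
      mul_le_mul_of_nonneg_left hdiff ha.le]
  nlinarith [mul_pos hη ha, hE]

lemma calc_good_mag2 {E s₀ η a w A v vq : ℝ} (hE : 0 < E) (hs : s₀^2 = E)
    (hη : 0 < η) (ha : 0 < a) (haw : w ≤ a) (hw : 0 ≤ w)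
    (hvq : vq^2 = A)
    (hvqub : vq ≤ 1.1*s₀) (hvlb : 0.6*s₀ ≤ v) (hvub : v ≤ 1.1*s₀)
    (hvnn : 0 ≤ v) (hvqnn : 0 ≤ vq)
    (h2 : a * v^2 ≤ w * A) (hvv2 : vq - v ≤ 2*η*s₀) : a - w ≤ 13*η*a := by
  have hs0 : 0 ≤ s₀ := by nlinarith
  have hv2lb : 0.36*E ≤ v^2 := by nlinarith
  have hdiff : vq^2 - v^2 ≤ 4.4*η*E := by
    nlinarith [mul_le_mul_of_nonneg_left hvv2 (show (0:ℝ) ≤ v + vq by positivity),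
      mul_le_mul_of_nonneg_right (show v + vq ≤ 2.2*s₀ by linarith)
        (show (0:ℝ) ≤ 2*η*s₀ by positivity)]
  have hstep : (a - w) * (0.36*E) ≤ 4.4*η*E*a := by
    nlinarith [mul_nonneg (sub_nonneg.2 haw) (sub_nonneg.2 hv2lb),
      mul_le_mul_of_nonneg_left hdiff hw,
      mul_le_mul_of_nonneg_right haw (show (0:ℝ) ≤ 4.4*η*E by positivity)]
  nlinarith [mul_pos hη ha, hE]

lemma final_good {η E a x ρ : ℝ} (hη : 0 < η) (hE : 0 < E) (ha : 0 < a)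
    (hρ : 0 ≤ ρ) (hx : x ≤ 60*η*a) : η^2*E*x ≤ 100*η^3*E*a + 100*ρ^2*a := by
  have h6 : η^2*E*x ≤ η^2*E*(60*η*a) := mul_le_mul_of_nonneg_left hx (by positivity)
  linarith [mul_nonneg (sq_nonneg ρ) ha.le, mul_nonneg (mul_nonneg (mul_nonneg
    (mul_nonneg hη.le hη.le) hη.le) hE.le) ha.le]

lemma bad_rho {η s₀ E ρ : ℝ} (hη : 0 < η) (hs0 : 0 ≤ s₀) (hs : s₀^2 = E)
    (hρ : 0 ≤ ρ) (hg : η * s₀ < ρ) : η^2*E ≤ ρ^2 := by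
  nlinarith [mul_le_mul hg.le hg.le (by positivity) hρ]

lemma calc_bad1 {E s₀ η a w A v ρ x : ℝ} (hE : 0 < E) (hs : s₀^2 = E)
    (hη : 0 < η) (ha : 0 < a) (hw : 0 ≤ w) (hvnn : 0 ≤ v)
    (hA1 : 0.36*E ≤ A) (hA2 : A ≤ 1.21*E) (hv2 : v ≤ 2*s₀)
    (hrat : w * A ≤ a*A + a*v^2) (hρ2 : η^2*E ≤ ρ^2)
    (hx : x ≤ w + a) (hxnn : 0 ≤ x) :
    η^2*E*x ≤ 100*η^3*E*a + 100*ρ^2*a := by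
  have hs0 : 0 ≤ s₀ := by nlinarith
  have hv2ub : v^2 ≤ 4*E := by nlinarith
  have hwub : w ≤ 16*a := by
    have hstep : w * (0.36*E) ≤ a * (1.21*E) + a * (4*E) := by
      nlinarith [mul_nonneg hw (sub_nonneg.2 hA1),
        mul_le_mul_of_nonneg_left hA2 ha.le,
        mul_le_mul_of_nonneg_left hv2ub ha.le]
    nlinarith [hE, ha, hstep]
  have h6 : η^2*E*x ≤ η^2*E*(17*a) :=
    mul_le_mul_of_nonneg_left (by linarith) (by positivity)
  have h7 : (17*a) * (η^2*E) ≤ (17*a) * ρ^2 :=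
    mul_le_mul_of_nonneg_left hρ2 (by positivity)
  linarith [mul_nonneg (mul_nonneg (mul_nonneg (mul_nonneg hη.le hη.le) hη.le) hE.le) ha.le,
    mul_nonneg (sq_nonneg ρ) ha.le]

set_option maxHeartbeats 800000 in
lemma calc_bad2 {E s₀ η a w A v ρ x m : ℝ} (hE : 0 < E) (hs : s₀^2 = E) (hs0 : 0 ≤ s₀)
    (hη : 0 < η) (hη1 : η ≤ 1/10) (ha : 0 < a) (hw : 0 ≤ w) (hvnn : 0 ≤ v)
    (hA1 : 0.36*E ≤ A) (hA2 : A ≤ 1.21*E)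
    (hm : m ≤ s₀) (hs2 : 2*s₀ < v) (hvm : v - m ≤ ρ)
    (hrat : w * A ≤ a*A + a*v^2) (hρ2 : η^2*E ≤ ρ^2) (hρ : 0 ≤ ρ)
    (hx : x ≤ w + a) (hxnn : 0 ≤ x) :
    η^2*E*x ≤ 100*η^3*E*a + 100*ρ^2*a := by
  have hρv : v ≤ 2*ρ := by linarith
  have hv2ρ : v^2 ≤ 4*ρ^2 := by
    nlinarith [mul_le_mul hρv hρv hvnn (by linarith : (0:ℝ) ≤ 2*ρ)]
  have hwb : w * (0.36*E) ≤ 1.21*a*E + 4*a*ρ^2 := by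
    nlinarith [mul_nonneg hw (sub_nonneg.2 hA1),
      mul_le_mul_of_nonneg_left hA2 ha.le,
      mul_le_mul_of_nonneg_left hv2ρ ha.le]
  have hkey : x * (0.36*E) ≤ 1.57*a*E + 4*a*ρ^2 := by
    linarith [mul_le_mul_of_nonneg_right hx (show (0:ℝ) ≤ 0.36*E by positivity), hwb]
  have h9 : η^2 * (x * (0.36*E)) ≤ η^2 * (1.57*a*E + 4*a*ρ^2) :=
    mul_le_mul_of_nonneg_left hkey (by positivity)
  have h10 : η^2 * (a*E) ≤ a * ρ^2 := by
    linarith [mul_le_mul_of_nonneg_left hρ2 ha.le]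
  have h11 : η^2 * (a*ρ^2) ≤ 0.01 * (a*ρ^2) := by
    linarith [mul_le_mul_of_nonneg_right
      (show η^2 ≤ 0.01 by nlinarith) (mul_nonneg ha.le (sq_nonneg ρ))]
  linarith [h9, h10, h11, mul_nonneg (mul_nonneg (mul_nonneg (mul_nonneg hη.le hη.le) hη.le) hE.le) ha.le,
    mul_nonneg ha.le (sq_nonneg ρ)]

section master
variable {F : Type*} [NormedAddCommGroup F] [NormedSpace ℝ F]
set_option maxHeartbeats 1000000 in
lemma master (φ' : ℝ → ℝ) (hmono : MonotoneOn φ' (Set.Ici 0))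
    (hnn : ∀ t, 0 ≤ t → 0 ≤ φ' t)
    (E : ℝ) (hE : 0 < E) (m Q₀ : F) (η : ℝ) (hη : 0 < η) (hη1 : η ≤ 1/10)
    (hm1 : ‖m‖^2 ≤ E) (hm2 : 0.49*E ≤ ‖m‖^2)
    (hQ₀ : ‖Vfn φ' Q₀ - m‖ ≤ η * Real.sqrt E) :
    0 < ‖Q₀‖ ∧ 0.36*E ≤ ‖Q₀‖ * φ' ‖Q₀‖ ∧
    ∀ W : F, η^2 * E * ‖W - Q₀‖ ≤
      100*η^3*E*‖Q₀‖ + 100 * ‖Vfn φ' W - m‖^2 * ‖Q₀‖ := by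
  have hs₀ : 0 < Real.sqrt E := Real.sqrt_pos.2 hE
  set s₀ := Real.sqrt E with hs₀def
  have hs₀sq : s₀^2 = E := Real.sq_sqrt hE.le
  have hmu : ‖m‖ ≤ s₀ := arith_sqrt_ub hs₀ (by nlinarith) (norm_nonneg m)
  have hml : 0.7*s₀ ≤ ‖m‖ := arith_sqrt_lb (by positivity) (by nlinarith) (norm_nonneg m)
  set vq := ‖Vfn φ' Q₀‖ with hvqdef
  have hvq_sq : vq^2 = ‖Q₀‖ * φ' ‖Q₀‖ := normVfn_sq φ' hnn Q₀
  have hvqnn : 0 ≤ vq := norm_nonneg _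
  have hηs : η * s₀ ≤ 0.1 * s₀ := by nlinarith
  have hvq_lb : 0.6*s₀ ≤ vq := by
    have h1 : ‖m‖ - ‖Vfn φ' Q₀‖ ≤ ‖Vfn φ' Q₀ - m‖ := by
      rw [norm_sub_rev]; exact norm_sub_norm_le m _
    linarith
  have hvq_ub : vq ≤ 1.1*s₀ := by
    have h1 : ‖Vfn φ' Q₀‖ - ‖m‖ ≤ ‖Vfn φ' Q₀ - m‖ := norm_sub_norm_le _ _
    linarith
  have hQne : Vfn φ' Q₀ ≠ 0 := by
    rw [← norm_pos_iff, ← hvqdef]; nlinarith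
  have hQ0pos : 0 < ‖Q₀‖ := by
    rcases eq_or_ne Q₀ 0 with rfl | h
    · exact absurd (by simp [Vfn]) hQne
    · exact norm_pos_iff.2 h
  have hθa : 0.36*E ≤ ‖Q₀‖ * φ' ‖Q₀‖ := by nlinarith
  refine ⟨hQ0pos, hθa, fun W => ?_⟩
  set a := ‖Q₀‖ with hadef
  set A := ‖Q₀‖ * φ' ‖Q₀‖ with hAdef
  have hA_ub : A ≤ 1.21*E := by nlinarith
  set ρ := ‖Vfn φ' W - m‖ with hρdef
  set v := ‖Vfn φ' W‖ with hvdef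
  have hv_sq : v^2 = ‖W‖ * φ' ‖W‖ := normVfn_sq φ' hnn W
  have hρnn : 0 ≤ ρ := norm_nonneg _
  have hvnn : 0 ≤ v := norm_nonneg _
  have hwnn : 0 ≤ ‖W‖ := norm_nonneg _
  have hrat : ‖W‖ * A ≤ a * A + a * v^2 := by
    rw [hAdef, hv_sq]; exact theta_ratio φ' hmono hnn hQ0pos hwnn
  by_cases hg : ρ ≤ η * s₀
  · -- good case
    have hv_lb : 0.6*s₀ ≤ v := by
      have h1 : ‖m‖ - ‖Vfn φ' W‖ ≤ ‖Vfn φ' W - m‖ := by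
        rw [norm_sub_rev]; exact norm_sub_norm_le m _
      linarith
    have hv_ub : v ≤ 1.1*s₀ := by
      have h1 : ‖Vfn φ' W‖ - ‖m‖ ≤ ‖Vfn φ' W - m‖ := norm_sub_norm_le _ _
      linarith
    have hWne : Vfn φ' W ≠ 0 := by rw [← norm_pos_iff, ← hvdef]; nlinarith
    have hW0 : W ≠ 0 := by
      rcases eq_or_ne W 0 with rfl | h
      · exact absurd (by simp [Vfn]) hWne
      · exact h
    have hw0 : 0 < ‖W‖ := norm_pos_iff.2 hW0
    have hVV : ‖Vfn φ' W - Vfn φ' Q₀‖ ≤ 2*η*s₀ := by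
      calc ‖Vfn φ' W - Vfn φ' Q₀‖ ≤ ‖Vfn φ' W - m‖ + ‖m - Vfn φ' Q₀‖ :=
            norm_sub_le_norm_sub_add_norm_sub _ _ _
      _ ≤ η*s₀ + η*s₀ := add_le_add hg (by rw [norm_sub_rev]; exact hQ₀)
      _ = 2*η*s₀ := by ring
    have hunit : ‖(‖W‖⁻¹ • W) - (‖Q₀‖⁻¹ • Q₀)‖ ≤ 20/3*η := by
      rw [← Vfn_unit φ' W hWne, ← Vfn_unit φ' Q₀ hQne]
      calc ‖(‖Vfn φ' W‖⁻¹ • Vfn φ' W) - (‖Vfn φ' Q₀‖⁻¹ • Vfn φ' Q₀)‖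
          ≤ 2 * ‖Vfn φ' W - Vfn φ' Q₀‖ / (0.6*s₀) :=
            unit_sub _ _ _ (by positivity) hv_lb hvq_lb
      _ ≤ 2 * (2*η*s₀) / (0.6*s₀) := by gcongr
      _ = 20/3*η := by field_simp; ring
    have hwub : ‖W‖ ≤ 7*a :=
      calc_good_w (η := η) hE hs₀sq hQ0pos hwnn hvnn hθa hA_ub hv_ub hrat
    have hvminus : v - vq ≤ 2*η*s₀ ∧ vq - v ≤ 2*η*s₀ := by
      have h1 := abs_le.1 (abs_norm_sub_norm_le (Vfn φ' W) (Vfn φ' Q₀))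
      constructor <;> linarith [h1.1, h1.2, hVV]
    have hmag : ‖W‖ - a ≤ 13*η*a ∧ a - ‖W‖ ≤ 13*η*a := by
      have hηa : 0 ≤ 13*η*a := by positivity
      constructor
      · rcases le_or_gt ‖W‖ a with h | h
        · linarith
        · have h1 : φ' a ≤ φ' ‖W‖ := hmono hQ0pos.le (hQ0pos.trans h).le h.le
          have h2 : ‖W‖ * A ≤ a * v^2 := by
            rw [hAdef, hv_sq]
            calc ‖W‖ * (‖Q₀‖ * φ' ‖Q₀‖) = (‖W‖ * ‖Q₀‖) * φ' ‖Q₀‖ := by ring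
            _ ≤ (‖W‖ * ‖Q₀‖) * φ' ‖W‖ :=
                  mul_le_mul_of_nonneg_left h1 (by positivity)
            _ = ‖Q₀‖ * (‖W‖ * φ' ‖W‖) := by ring
          exact calc_good_mag1 hE hs₀sq hη hQ0pos h.le hθa hvq_sq hvq_ub hv_ub
            hvnn hvqnn h2 hvminus.1
      · rcases le_or_gt a ‖W‖ with h | h
        · linarith
        · have h1 : φ' ‖W‖ ≤ φ' a := hmono hw0.le hQ0pos.le h.le
          have h2 : a * v^2 ≤ ‖W‖ * A := by
            rw [hAdef, hv_sq]
            calc ‖Q₀‖ * (‖W‖ * φ' ‖W‖) = (‖W‖ * ‖Q₀‖) * φ' ‖W‖ := by ring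
            _ ≤ (‖W‖ * ‖Q₀‖) * φ' a :=
                  mul_le_mul_of_nonneg_left h1 (by positivity)
            _ = ‖W‖ * (‖Q₀‖ * φ' ‖Q₀‖) := by ring
          exact calc_good_mag2 hE hs₀sq hη hQ0pos h.le hwnn hvq_sq hvq_ub hv_lb
            hv_ub hvnn hvqnn h2 hvminus.2
    have hkey : ‖W - Q₀‖ ≤ 60*η*a := by
      have h1 : ‖W‖ • (‖W‖⁻¹ • W) = W := smul_inv_smul₀ (ne_of_gt hw0) W
      have h2 : a • (a⁻¹ • Q₀) = Q₀ := smul_inv_smul₀ (ne_of_gt hQ0pos) Q₀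
      have hsplit : W - Q₀ =
          ‖W‖ • ((‖W‖⁻¹ • W) - (a⁻¹ • Q₀)) + (‖W‖ - a) • (a⁻¹ • Q₀) := by
        rw [smul_sub, sub_smul, h1]
        nth_rewrite 1 [← h2]
        abel
      have hnorm1 : ‖(a⁻¹ • Q₀ : F)‖ = 1 := by
        rw [norm_smul, Real.norm_eq_abs, abs_of_pos (by positivity)]
        field_simp
        exact hadef.symm
      have habs : |‖W‖ - a| ≤ 13*η*a := abs_le.2 ⟨by linarith [hmag.2], hmag.1⟩
      calc ‖W - Q₀‖ ≤ ‖‖W‖ • ((‖W‖⁻¹ • W) - (a⁻¹ • Q₀))‖ + ‖(‖W‖ - a) • (a⁻¹ • Q₀)‖ := by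
            rw [hsplit]; exact norm_add_le _ _
      _ = ‖W‖ * ‖(‖W‖⁻¹ • W) - (a⁻¹ • Q₀)‖ + |‖W‖ - a| * 1 := by
            rw [norm_smul, norm_smul, Real.norm_eq_abs, Real.norm_eq_abs,
              abs_of_pos hw0, hnorm1]
      _ ≤ 7*a * (20/3*η) + 13*η*a * 1 := by
            have h4 : ‖W‖ * ‖(‖W‖⁻¹ • W) - (a⁻¹ • Q₀)‖ ≤ 7*a * (20/3*η) :=
              mul_le_mul hwub hunit (norm_nonneg _) (by positivity)
            have h5 : |‖W‖ - a| * 1 ≤ 13*η*a * 1 := by simpa using habs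
            linarith
      _ ≤ 60*η*a := by nlinarith [mul_pos hη hQ0pos]
    exact final_good hη hE hQ0pos hρnn hkey
  · -- bad case
    push_neg at hg
    have hρ2 : η^2*E ≤ ρ^2 := bad_rho hη hs₀.le hs₀sq hρnn hg
    have hx : ‖W - Q₀‖ ≤ ‖W‖ + a := norm_sub_le W Q₀
    have hxnn : 0 ≤ ‖W - Q₀‖ := norm_nonneg _
    rcases le_or_gt v (2*s₀) with hv2 | hv2
    · exact calc_bad1 hE hs₀sq hη hQ0pos hwnn hvnn hθa hA_ub hv2 hrat hρ2 hx hxnn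
    · have hvm : v - ‖m‖ ≤ ρ := norm_sub_norm_le _ _
      exact calc_bad2 hE hs₀sq hs₀.le hη hη1 hQ0pos hwnn hvnn hθa hA_ub hmu hv2
        hvm hrat hρ2 hρnn hx hxnn



end master

set_option maxHeartbeats 2000000 in
/-- If the excess of `V(∇u)` over a ball `B` is `δ`-small compared to the average of
`|V(∇u)|²`, then `⨍_B |V(∇u)|² ≤ 4 |V(⟨∇u⟩_B)|²` and the excess is controlled by
`4δ |V(⟨∇u⟩_B)|²`; `δ` depends only on the characteristics of `φ`.
Here `du` stands for the (weak) gradient `∇u` of `u ∈ W^{1,φ}(B; ℝ^N)`. -/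
theorem smallness_nondegenerate (c₁ c₂ : ℝ) (hc₁ : 0 < c₁) (hc₂ : 0 < c₂) :
    ∃ δ : ℝ, 0 < δ ∧
      ∀ (N n : ℕ) (φ φ' φ'' : ℝ → ℝ), IsNFunction φ φ' →
        (∀ t > (0:ℝ), HasDerivAt φ' (φ'' t) t) →
        (∀ t > (0:ℝ), ContinuousAt φ'' t) →
        (∀ t > (0:ℝ), c₁ * φ' t ≤ t * φ'' t ∧ t * φ'' t ≤ c₂ * φ' t) →
        ∀ (x₀ : EuclideanSpace ℝ (Fin n)) (r : ℝ), 0 < r →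
        ∀ du : EuclideanSpace ℝ (Fin n) → EuclideanSpace ℝ (Fin N × Fin n),
          MeasureTheory.IntegrableOn du (Metric.ball x₀ r) →
          MeasureTheory.IntegrableOn (fun x => φ ‖du x‖) (Metric.ball x₀ r) →
          MeasureTheory.IntegrableOn (fun x => Vfn φ' (du x)) (Metric.ball x₀ r) →
          MeasureTheory.IntegrableOn (fun x => ‖Vfn φ' (du x)‖ ^ 2) (Metric.ball x₀ r) →
          MeasureTheory.IntegrableOn
            (fun x => ‖Vfn φ' (du x) - ⨍ y in Metric.ball x₀ r, Vfn φ' (du y)‖ ^ 2)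
            (Metric.ball x₀ r) →
          (⨍ x in Metric.ball x₀ r,
              ‖Vfn φ' (du x) - ⨍ y in Metric.ball x₀ r, Vfn φ' (du y)‖ ^ 2) ≤
            δ * ⨍ x in Metric.ball x₀ r, ‖Vfn φ' (du x)‖ ^ 2 →
          ((⨍ x in Metric.ball x₀ r, ‖Vfn φ' (du x)‖ ^ 2) ≤
              4 * ‖Vfn φ' (⨍ x in Metric.ball x₀ r, du x)‖ ^ 2 ∧
            (⨍ x in Metric.ball x₀ r,
                ‖Vfn φ' (du x) - ⨍ y in Metric.ball x₀ r, Vfn φ' (du y)‖ ^ 2) ≤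
              4 * δ * ‖Vfn φ' (⨍ x in Metric.ball x₀ r, du x)‖ ^ 2) := by
  -- choice of constants
  have h1c₂ : (0:ℝ) < 1 + c₂ := by linarith
  set b : ℝ := (0.7:ℝ) ^ ((1:ℝ)/(1+c₂)) with hbdef
  have hb_pos : 0 < b := Real.rpow_pos_of_pos (by norm_num) _
  have hb_lt1 : b < 1 := by
    apply Real.rpow_lt_one (by norm_num) (by norm_num)
    positivity
  set τ : ℝ := 1 - b with hτdef
  have hτ : 0 < τ := by simp only [hτdef]; linarith
  have hτ1 : τ < 1 := by simp only [hτdef]; linarith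
  set δ : ℝ := τ^3/10^9 with hδdef
  have hδ : 0 < δ := by positivity
  set η : ℝ := τ/400 with hηdef
  have hη : 0 < η := by positivity
  have hη1 : η ≤ 1/10 := by rw [hηdef]; linarith
  have hτ2 : 0 < τ^2 := pow_pos hτ 2
  have hτ32 : τ^3 ≤ τ^2 := by nlinarith [mul_nonneg (mul_nonneg hτ.le hτ.le) (sub_nonneg.2 hτ1.le)]
  have hδη : δ < η^2 := by rw [hδdef, hηdef]; nlinarith
  have hδhalf : δ ≤ 1/2 := by rw [hδdef]; nlinarith [pow_pos hτ 3]
  have hnum : 100*η^3 + 100*δ ≤ τ*η^2 := by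
    rw [hδdef, hηdef]; nlinarith [pow_pos hτ 3]
  refine ⟨δ, hδ, ?_⟩
  intro N n φ φ' φ'' hNf hd hcont hineq x₀ r hr du hdu hφint hVint hV2int hexcint hsmall
  obtain ⟨-, -, hφ'mono, -, hφ'0, hφ'pos, -⟩ := hNf
  have hnn : ∀ t, 0 ≤ t → 0 ≤ φ' t := by
    intro t ht
    have := hφ'mono (le_refl (0:ℝ)) ht ht
    rwa [hφ'0] at this
  have hub : ∀ t > (0:ℝ), t * φ'' t ≤ c₂ * φ' t := fun t ht => (hineq t ht).2
  set B := Metric.ball x₀ r with hBdef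
  have hμpos : 0 < volume B := measure_ball_pos _ _ hr
  have hμfin : volume B < ⊤ := measure_ball_lt_top
  set k : ℝ := (volume B).toReal with hkdef
  have hk : 0 < k := ENNReal.toReal_pos (ne_of_gt hμpos) (ne_of_lt hμfin)
  have hkreal : volume.real B = k := rfl
  set f : EuclideanSpace ℝ (Fin n) → EuclideanSpace ℝ (Fin N × Fin n) :=
    fun x => Vfn φ' (du x) with hfdef
  set m := ⨍ y in B, f y with hmdef
  set E := ⨍ x in B, ‖f x‖^2 with hEdef
  set exc := ⨍ x in B, ‖f x - m‖^2 with hexcdef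
  set P := ⨍ x in B, du x with hPdef
  -- basic integral identities
  have hconst_int : ∀ c : ℝ, IntegrableOn (fun _ : EuclideanSpace ℝ (Fin n) => c) B :=
    fun c => integrableOn_const hμfin.ne
  have hintf : ∫ x in B, f x = k • m := by
    rw [hmdef, setAverage_eq, hkreal, smul_inv_smul₀ (ne_of_gt hk)]
  have hE_int : ∫ x in B, ‖f x‖^2 = k * E := by
    rw [hEdef, setAverage_eq, hkreal, smul_eq_mul, ← mul_assoc,
      mul_inv_cancel₀ (ne_of_gt hk), one_mul]
  have hexc_int : ∫ x in B, ‖f x - m‖^2 = k * exc := by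
    rw [hexcdef, setAverage_eq, hkreal, smul_eq_mul, ← mul_assoc,
      mul_inv_cancel₀ (ne_of_gt hk), one_mul]
  -- the identity exc = E - ‖m‖²
  have hinner_int : IntegrableOn (fun x => @inner ℝ _ _ (f x) m) B :=
    hVint.inner_const m
  have hid0 : ∫ x in B, ‖f x - m‖^2 =
      (∫ x in B, ‖f x‖^2) - 2 * (∫ x in B, (inner ℝ (f x) m : ℝ)) + k * ‖m‖^2 := by
    have hptw : (fun x => ‖f x - m‖^2) =
        fun x => ‖f x‖^2 - 2 * (inner ℝ (f x) m : ℝ) + ‖m‖^2 := by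
      funext x
      exact norm_sub_sq_real (f x) m
    rw [hptw]
    have hsub : IntegrableOn (fun x => ‖f x‖^2 - 2 * (inner ℝ (f x) m : ℝ)) B :=
      hV2int.sub (hinner_int.const_mul 2)
    calc ∫ x in B, (‖f x‖^2 - 2 * (inner ℝ (f x) m : ℝ) + ‖m‖^2)
        = (∫ x in B, (‖f x‖^2 - 2 * (inner ℝ (f x) m : ℝ))) + ∫ x in B, (‖m‖^2 : ℝ) :=
          integral_add hsub (hconst_int (‖m‖^2))
    _ = ((∫ x in B, ‖f x‖^2) - ∫ x in B, 2 * (inner ℝ (f x) m : ℝ)) + ∫ x in B, (‖m‖^2 : ℝ) := by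
          rw [integral_sub hV2int (hinner_int.const_mul 2)]
    _ = (∫ x in B, ‖f x‖^2) - 2 * (∫ x in B, (inner ℝ (f x) m : ℝ)) + k * ‖m‖^2 := by
          rw [integral_const_mul, setIntegral_const, hkreal, smul_eq_mul]
  have hid1 : ∫ x in B, (inner ℝ (f x) m : ℝ) = k * ‖m‖^2 := by
    have h1 : ∫ x in B, (inner ℝ m (f x) : ℝ) = (inner ℝ m (∫ x in B, f x) : ℝ) :=
      integral_inner hVint m
    have h2 : ∀ x, (inner ℝ (f x) m : ℝ) = (inner ℝ m (f x) : ℝ) := fun x => real_inner_comm _ _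
    calc ∫ x in B, (inner ℝ (f x) m : ℝ) = ∫ x in B, (inner ℝ m (f x) : ℝ) := by
          simp_rw [h2]
    _ = (inner ℝ m (∫ x in B, f x) : ℝ) := h1
    _ = k * ‖m‖^2 := by
          rw [hintf, real_inner_smul_right, real_inner_self_eq_norm_sq]
  have hidentity : k * exc = k * E - k * ‖m‖^2 := by
    rw [← hexc_int, hid0, hid1, hE_int]; ring
  have hm_eq : ‖m‖^2 = E - exc := by
    have h := hidentity
    have h2 : k * (‖m‖^2) = k * (E - exc) := by linarith
    exact mul_left_cancel₀ (ne_of_gt hk) h2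
  -- exc ≥ 0, E ≥ 0
  have hexc0 : 0 ≤ exc := by
    rw [hexcdef, setAverage_eq, smul_eq_mul]
    apply mul_nonneg (by positivity)
    exact setIntegral_nonneg measurableSet_ball (fun x _ => sq_nonneg _)
  have hE0 : 0 ≤ E := by
    rw [hEdef, setAverage_eq, smul_eq_mul]
    apply mul_nonneg (by positivity)
    exact setIntegral_nonneg measurableSet_ball (fun x _ => sq_nonneg _)
  rcases hE0.eq_or_lt with hEzero | hE
  · -- degenerate case E = 0
    constructor
    · rw [← hEzero]; positivity
    · have h1 : exc ≤ 0 := by rw [← hEzero] at hsmall; simpa using hsmall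
      have h2 : (0:ℝ) ≤ 4 * δ * ‖Vfn φ' P‖^2 := by positivity
      linarith
  -- main case E > 0
  have hm_ub : ‖m‖^2 ≤ E := by linarith
  have hδE : δ * E < η^2 * E := by
    apply mul_lt_mul_of_pos_right hδη hE
  have hm_lb : 0.49*E ≤ ‖m‖^2 := by
    have h1 : δ*E ≤ 1/2*E := mul_le_mul_of_nonneg_right hδhalf hE0
    linarith [hm_eq, hsmall]
  set s₀ := Real.sqrt E with hs₀def
  have hs₀ : 0 < s₀ := Real.sqrt_pos.2 hE
  have hs₀sq : s₀^2 = E := Real.sq_sqrt hE.le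
  -- existence of a good point
  have hexists : ∃ x ∈ B, ‖f x - m‖ ≤ η * s₀ := by
    by_contra hcon
    push_neg at hcon
    have hmono_int : ∫ x in B, (η^2 * E) ≤ ∫ x in B, ‖f x - m‖^2 := by
      apply setIntegral_mono_on (hconst_int _) hexcint measurableSet_ball
      intro x hx
      exact bad_rho hη hs₀.le hs₀sq (norm_nonneg _) (hcon x hx)
    rw [setIntegral_const, hkreal, smul_eq_mul, hexc_int] at hmono_int
    have h3 : k * exc ≤ k * (δ * E) := mul_le_mul_of_nonneg_left hsmall hk.le
    have h9 : η^2*E ≤ δ*E := le_of_mul_le_mul_left (by linarith) hk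
    linarith
  obtain ⟨xs, hxsB, hxs⟩ := hexists
  set Q₀ := du xs with hQ₀def
  obtain ⟨ha, hθa, hptwise⟩ := master φ' hφ'mono hnn E hE m Q₀ η hη hη1 hm_ub hm_lb hxs
  set a := ‖Q₀‖ with hadef
  -- integrate the pointwise bound
  have hdiff_int : IntegrableOn (fun x => ‖du x - Q₀‖) B :=
    (hdu.sub (integrableOn_const hμfin.ne)).norm
  have hlhs_int : IntegrableOn (fun x => η^2 * E * ‖du x - Q₀‖) B :=
    hdiff_int.const_mul _
  have hrhs_int : IntegrableOn
      (fun x => 100*η^3*E*a + 100 * ‖f x - m‖^2 * a) B := by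
    apply (hconst_int _).add
    exact IntegrableOn.congr_fun (hexcint.const_mul (100*a))
      (fun x _ => by ring) measurableSet_ball
  have hint_mono : ∫ x in B, η^2 * E * ‖du x - Q₀‖ ≤
      ∫ x in B, (100*η^3*E*a + 100 * ‖f x - m‖^2 * a) := by
    apply setIntegral_mono_on hlhs_int hrhs_int measurableSet_ball
    intro x _
    exact hptwise (du x)
  have hlhs_eq : ∫ x in B, η^2 * E * ‖du x - Q₀‖ =
      η^2 * E * ∫ x in B, ‖du x - Q₀‖ := integral_const_mul _ _
  have hrhs_eq : ∫ x in B, (100*η^3*E*a + 100 * ‖f x - m‖^2 * a) =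
      k * (100*η^3*E*a) + 100 * (k * exc) * a := by
    have h1 : ∫ x in B, (100*η^3*E*a + 100 * ‖f x - m‖^2 * a) =
        (∫ x in B, (100*η^3*E*a : ℝ)) + ∫ x in B, 100 * ‖f x - m‖^2 * a := by
      apply integral_add (hconst_int _)
      exact IntegrableOn.congr_fun (hexcint.const_mul (100*a))
        (fun x _ => by ring) measurableSet_ball
    rw [h1, setIntegral_const, hkreal, smul_eq_mul]
    congr 1
    have h2 : ∀ x, 100 * ‖f x - m‖^2 * a = (100*a) * ‖f x - m‖^2 := fun x => by ring
    simp_rw [h2]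
    rw [integral_const_mul, hexc_int]
    ring
  -- bound on ‖P - Q₀‖
  have hPQ0 : ‖P - Q₀‖ ≤ k⁻¹ * ∫ x in B, ‖du x - Q₀‖ := by
    have h1 : ∫ x in B, (du x - Q₀) = (∫ x in B, du x) - k • Q₀ := by
      rw [integral_sub hdu (integrableOn_const hμfin.ne), setIntegral_const, hkreal]
    have h2 : P - Q₀ = k⁻¹ • ∫ x in B, (du x - Q₀) := by
      rw [h1, smul_sub, hPdef, setAverage_eq, hkreal, smul_smul,
        inv_mul_cancel₀ (ne_of_gt hk), one_smul]
    rw [h2, norm_smul, Real.norm_eq_abs, abs_of_pos (by positivity)]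
    gcongr
    exact norm_integral_le_integral_norm _
  have hPQ : ‖P - Q₀‖ ≤ τ * a := by
    have hL : η^2 * E * ∫ x in B, ‖du x - Q₀‖ ≤
        k * (100*η^3*E*a) + 100 * (k * (δ*E)) * a := by
      rw [← hlhs_eq]
      refine hint_mono.trans ?_
      rw [hrhs_eq]
      have h3 : k * exc ≤ k * (δ*E) := mul_le_mul_of_nonneg_left hsmall hk.le
      linarith [mul_le_mul_of_nonneg_right h3 (by positivity : (0:ℝ) ≤ 100*a)]
    have hInorm : 0 ≤ ∫ x in B, ‖du x - Q₀‖ :=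
      setIntegral_nonneg measurableSet_ball (fun x _ => norm_nonneg _)
    have hL2 : η^2 * E * ‖P - Q₀‖ ≤ 100*η^3*E*a + 100*δ*E*a := by
      have h3 : η^2 * E * ‖P - Q₀‖ ≤ η^2 * E * (k⁻¹ * ∫ x in B, ‖du x - Q₀‖) :=
        mul_le_mul_of_nonneg_left hPQ0 (by positivity)
      have h4 : k⁻¹ * (η^2 * E * ∫ x in B, ‖du x - Q₀‖) ≤
          k⁻¹ * (k * (100*η^3*E*a) + 100 * (k * (δ*E)) * a) :=
        mul_le_mul_of_nonneg_left hL (by positivity)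
      have h5 : k⁻¹ * (k * (100*η^3*E*a) + 100 * (k * (δ*E)) * a) =
          100*η^3*E*a + 100*δ*E*a := by
        field_simp
      calc η^2 * E * ‖P - Q₀‖ ≤ η^2 * E * (k⁻¹ * ∫ x in B, ‖du x - Q₀‖) := h3
      _ = k⁻¹ * (η^2 * E * ∫ x in B, ‖du x - Q₀‖) := by ring
      _ ≤ k⁻¹ * (k * (100*η^3*E*a) + 100 * (k * (δ*E)) * a) := h4
      _ = 100*η^3*E*a + 100*δ*E*a := h5
    -- use hnum : 100η³ + 100δ ≤ τη²
    have h6 : (100*η^3 + 100*δ) * (E*a) ≤ (τ*η^2) * (E*a) :=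
      mul_le_mul_of_nonneg_right hnum (by positivity)
    have h7 : η^2 * E * ‖P - Q₀‖ ≤ η^2 * E * (τ*a) := by linarith [hL2, h6]
    have h8 : 0 < η^2 * E := by positivity
    exact le_of_mul_le_mul_left (by linarith [h7]) h8
  -- lower bound for ‖P‖ and conclusion
  have hP_lb : (1-τ) * a ≤ ‖P‖ := by
    have h1 : ‖P - (P - Q₀)‖ ≤ ‖P‖ + ‖P - Q₀‖ := norm_sub_le _ _
    rw [sub_sub_cancel] at h1
    have : a ≤ ‖P‖ + τ * a := by
      calc a = ‖Q₀‖ := hadef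
      _ ≤ ‖P‖ + ‖P - Q₀‖ := h1
      _ ≤ ‖P‖ + τ * a := by linarith
    linarith [this]
  have h1τ : 0 < 1 - τ := by linarith
  have h0τa : 0 < (1-τ)*a := mul_pos h1τ ha
  have hPpos : 0 < ‖P‖ := lt_of_lt_of_le h0τa hP_lb
  have hgr := gronwall φ' φ'' c₂ hd hφ'pos hub h0τa
    (show (1-τ)*a ≤ a by linarith [mul_nonneg hτ.le ha.le, (by ring : (1-τ)*a = a - τ*a)])
  have hfrac : ((1-τ)*a)/a = 1-τ := by field_simp
  rw [hfrac] at hgr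
  have hθmono : ((1-τ)*a) * φ' ((1-τ)*a) ≤ ‖P‖ * φ' ‖P‖ :=
    mul_le_mul hP_lb (hφ'mono h0τa.le hPpos.le hP_lb) (hnn _ h0τa.le) hPpos.le
  have hpow : (1-τ) * (1-τ)^(c₂:ℝ) = 0.7 := by
    have h1 : (1:ℝ) - τ = b := by rw [hτdef]; ring
    have h2 : b * b^(c₂:ℝ) = b^((1:ℝ) + c₂) := by
      rw [Real.rpow_add hb_pos, Real.rpow_one]
    rw [h1, h2, hbdef, ← Real.rpow_mul (by norm_num : (0:ℝ) ≤ 0.7),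
      show (1:ℝ)/(1+c₂) * (1+c₂) = 1 by field_simp, Real.rpow_one]
  have hchain : 0.7 * (a * φ' a) ≤ ‖P‖ * φ' ‖P‖ := by
    have h1 : ((1-τ)*a) * ((1-τ)^(c₂:ℝ) * φ' a) ≤ ((1-τ)*a) * φ' ((1-τ)*a) :=
      mul_le_mul_of_nonneg_left hgr h0τa.le
    have h2 : ((1-τ)*a) * ((1-τ)^(c₂:ℝ) * φ' a) = ((1-τ) * (1-τ)^(c₂:ℝ)) * (a * φ' a) := by
      ring
    rw [h2, hpow] at h1
    exact h1.trans hθmono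
  have hVP : ‖Vfn φ' P‖^2 = ‖P‖ * φ' ‖P‖ := normVfn_sq φ' hnn P
  have hgoal1 : E ≤ 4 * ‖Vfn φ' P‖^2 := by
    rw [hVP]
    linarith [mul_le_mul_of_nonneg_left hθa (by norm_num : (0:ℝ) ≤ 0.7), hchain, hE.le]
  refine ⟨hgoal1, ?_⟩
  calc exc ≤ δ * E := hsmall
  _ ≤ δ * (4 * ‖Vfn φ' P‖^2) := mul_le_mul_of_nonneg_left hgoal1 hδ.le
  _ = 4 * δ * ‖Vfn φ' P‖^2 := by ring
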